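/- arXiv:1702.06238 — 2 statements merged into one kernel-verified Lean document; each statement's English description precedes it below -/
import Mathlib

section
/- Let Π be a family of deterministic stopping policies (functions List O → Bool) whose VC dimension, as Boolean classifiers on List O, is at most d, with d ≥ 1. Let x₁, …, xₙ be n full trajectories of horizon H with n·H ≥ d. Then the number of distinct stopping-time vectors { (τ_π(x₁), …, τ_π(xₙ)) : π ∈ Π } is at most (e·n·H/d)^d. -/
open scoped BigOperators

/-- The `t`-prefix of a full trajectory `x : Fin H → O`, i.e. the list `[x 0, …, x (t-1)]`. -/
def trajPrefix {O : Type*} {H : ℕ} (x : Fin H → O) (t : ℕ) : List O :=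
  (List.ofFn x).take t

open Classical in
/-- The stopping time of policy `π` on full trajectory `x`: the least `t` with
`1 ≤ t ≤ H` such that `π` halts on the `t`-prefix of `x`, and `H` if no such `t` exists. -/
noncomputable def stopTime {O : Type*} (H : ℕ) (π : List O → Bool) (x : Fin H → O) : ℕ :=
  if h : ∃ t, (1 ≤ t ∧ t ≤ H) ∧ π (trajPrefix x t) = true then Nat.find h else H

/-- The return of policy `π` on full trajectory `x` under reward function `g`. -/
noncomputable def policyReturn {O : Type*} {H : ℕ} (g : List O → ℝ) (π : List O → Bool)
    (x : Fin H → O) : ℝ :=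
  g (trajPrefix x (stopTime H π x))

/-- A family `Π` of policies shatters a finite set `S` of lists if every Boolean
labeling of `S` is realized by some member of `Π`. -/
def ShattersLists {O : Type*} (P : Set (List O → Bool)) (S : Finset (List O)) : Prop :=
  ∀ f : List O → Bool, ∃ π ∈ P, ∀ l ∈ S, π l = f l

lemma sum_choose_le_exp_pow (m d : ℕ) (hd : 1 ≤ d) (hdm : d ≤ m) :
    (∑ k ∈ Finset.Iic d, ((m.choose k : ℝ))) ≤ (Real.exp 1 * m / d) ^ d := by
  have hm : 0 < m := lt_of_lt_of_le hd hdm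
  set r : ℝ := (d : ℝ) / m with hr
  have hr0 : 0 < r := by positivity
  have hr1 : r ≤ 1 := by
    rw [hr, div_le_one (by positivity)]
    exact_mod_cast hdm
  have h1 : (∑ k ∈ Finset.Iic d, ((m.choose k : ℝ))) * r ^ d
      ≤ ∑ k ∈ Finset.Iic d, (m.choose k : ℝ) * r ^ k := by
    rw [Finset.sum_mul]
    refine Finset.sum_le_sum fun k hk => ?_
    have : r ^ d ≤ r ^ k := pow_le_pow_of_le_one hr0.le hr1 (Finset.mem_Iic.1 hk)
    exact mul_le_mul_of_nonneg_left this (by positivity)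
  have h2 : (∑ k ∈ Finset.Iic d, (m.choose k : ℝ) * r ^ k)
      ≤ ∑ k ∈ Finset.range (m + 1), (m.choose k : ℝ) * r ^ k := by
    refine Finset.sum_le_sum_of_subset_of_nonneg ?_ (fun k _ _ => by positivity)
    intro k hk
    simp only [Finset.mem_Iic] at hk
    simp only [Finset.mem_range]
    omega
  have h3 : (∑ k ∈ Finset.range (m + 1), (m.choose k : ℝ) * r ^ k) = (r + 1) ^ m := by
    rw [add_pow]
    refine Finset.sum_congr rfl fun k hk => ?_
    ring
  have h4 : (r + 1) ^ m ≤ Real.exp 1 ^ d := by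
    calc (r + 1) ^ m ≤ Real.exp r ^ m := by
          apply pow_le_pow_left₀ (by positivity)
          linarith [Real.add_one_le_exp r]
        _ = Real.exp (m * r) := (Real.exp_nat_mul r m).symm
        _ = Real.exp 1 ^ d := by
          rw [Real.exp_one_pow]
          congr 1
          rw [hr]
          field_simp
  have hkey : (∑ k ∈ Finset.Iic d, ((m.choose k : ℝ))) * r ^ d ≤ Real.exp 1 ^ d := by
    linarith
  have hrd : 0 < r ^ d := by positivity
  rw [← le_div_iff₀ hrd] at hkey
  have hd0 : (d : ℝ) ≠ 0 := by positivity
  have hm0 : (m : ℝ) ≠ 0 := by positivity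
  have hend : Real.exp 1 ^ d / r ^ d = (Real.exp 1 * m / d) ^ d := by
    rw [hr, div_pow, div_pow, mul_pow]
    field_simp
  linarith [hkey, hend.le, hend.ge]

lemma stopTime_congr' {O : Type*} {H : ℕ} (π₁ π₂ : List O → Bool) (x : Fin H → O)
    (h : ∀ t, 1 ≤ t → t ≤ H → π₁ (trajPrefix x t) = π₂ (trajPrefix x t)) :
    stopTime H π₁ x = stopTime H π₂ x := by
  classical
  unfold stopTime
  have hiff : ∀ t, ((1 ≤ t ∧ t ≤ H) ∧ π₁ (trajPrefix x t) = true) ↔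
      ((1 ≤ t ∧ t ≤ H) ∧ π₂ (trajPrefix x t) = true) := by
    intro t
    constructor
    · rintro ⟨ht, hp⟩; exact ⟨ht, by rw [← h t ht.1 ht.2]; exact hp⟩
    · rintro ⟨ht, hp⟩; exact ⟨ht, by rw [h t ht.1 ht.2]; exact hp⟩
  by_cases h₁ : ∃ t, (1 ≤ t ∧ t ≤ H) ∧ π₁ (trajPrefix x t) = true
  · have h₂ : ∃ t, (1 ≤ t ∧ t ≤ H) ∧ π₂ (trajPrefix x t) = true := by
      obtain ⟨t, ht⟩ := h₁; exact ⟨t, (hiff t).1 ht⟩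
    rw [dif_pos h₁, dif_pos h₂]
    apply le_antisymm
    · exact Nat.find_le ((hiff _).2 (Nat.find_spec h₂))
    · exact Nat.find_le ((hiff _).1 (Nat.find_spec h₁))
  · have h₂ : ¬ ∃ t, (1 ≤ t ∧ t ≤ H) ∧ π₂ (trajPrefix x t) = true := by
      rintro ⟨t, ht⟩; exact h₁ ⟨t, (hiff t).2 ht⟩
    rw [dif_neg h₁, dif_neg h₂]


/-- The number of distinct stopping-time vectors produced by a VC-dimension-`d` policy class
on `n` full trajectories of horizon `H` is at most `(e·n·H/d)^d`. -/
theorem stopTime_vectors_card_le {O : Type*} {H n d : ℕ} (hH : 1 ≤ H) (hd : 1 ≤ d)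
    (P : Set (List O → Bool))
    (hVC : ∀ S : Finset (List O), S.card = d + 1 → ¬ ShattersLists P S)
    (x : Fin n → (Fin H → O)) (hnH : d ≤ n * H) :
    ((Set.ncard {v : Fin n → ℕ | ∃ π ∈ P, v = fun i => stopTime H π (x i)} : ℝ))
      ≤ (Real.exp 1 * n * H / d) ^ d := by
  classical
  set S : Finset (List O) :=
    Finset.image (fun p : Fin n × Fin H => trajPrefix (x p.1) (p.2 + 1)) Finset.univ with hS
  have hmemS : ∀ (i : Fin n) (t : ℕ), 1 ≤ t → t ≤ H → trajPrefix (x i) t ∈ S := by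
    intro i t ht1 ht2
    rw [hS]
    refine Finset.mem_image.2 ⟨(i, ⟨t - 1, by omega⟩), Finset.mem_univ _, ?_⟩
    congr 1
    simp
    omega
  set 𝒜 : Finset (Finset (List O)) :=
    S.powerset.filter (fun A => ∃ π ∈ P, A = S.filter (fun l => π l = true)) with h𝒜
  -- Step 1: the stopping-time vectors are covered by images of traces in 𝒜
  have step1 : {v : Fin n → ℕ | ∃ π ∈ P, v = fun i => stopTime H π (x i)} ⊆
      (fun A : Finset (List O) => fun i => stopTime H (fun l => decide (l ∈ A)) (x i)) '' ↑𝒜 := by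
    rintro v ⟨π, hπ, rfl⟩
    refine ⟨S.filter (fun l => π l = true), ?_, ?_⟩
    · rw [h𝒜]
      simp only [Finset.coe_filter, Set.mem_setOf_eq, Finset.mem_powerset]
      exact ⟨Finset.filter_subset _ _, π, hπ, rfl⟩
    · funext i
      refine (stopTime_congr' _ _ _ ?_)
      intro t ht1 ht2
      have hmem := hmemS i t ht1 ht2
      simp [Finset.mem_filter, hmem]
  have hcard1 : Set.ncard {v : Fin n → ℕ | ∃ π ∈ P, v = fun i => stopTime H π (x i)} ≤ 𝒜.card := by
    calc Set.ncard {v : Fin n → ℕ | ∃ π ∈ P, v = fun i => stopTime H π (x i)}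
        ≤ Set.ncard ((fun A : Finset (List O) =>
            fun i => stopTime H (fun l => decide (l ∈ A)) (x i)) '' ↑𝒜) :=
          Set.ncard_le_ncard step1 ((𝒜.finite_toSet).image _)
      _ ≤ Set.ncard (↑𝒜 : Set (Finset (List O))) := Set.ncard_image_le 𝒜.finite_toSet
      _ = 𝒜.card := Set.ncard_coe_finset 𝒜
  -- Step 2: shattered sets have card ≤ d and are subsets of S
  have hshat : ∀ s : Finset (List O), 𝒜.Shatters s → s ⊆ S ∧ s.card ≤ d := by
    intro s hs
    have hsS : s ⊆ S := by
      obtain ⟨A, hA, hsA⟩ := hs.exists_superset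
      rw [h𝒜] at hA
      exact hsA.trans (Finset.mem_powerset.1 (Finset.mem_filter.1 hA).1)
    refine ⟨hsS, ?_⟩
    by_contra hcontra
    obtain ⟨s', hs'sub, hs'card⟩ := Finset.exists_subset_card_eq (s := s) (n := d + 1) (by omega)
    have hshat' : 𝒜.Shatters s' := hs.mono_right hs'sub
    refine hVC s' hs'card ?_
    intro f
    obtain ⟨A, hA𝒜, hint⟩ := hshat' (Finset.filter_subset (fun l => f l = true) s')
    rw [h𝒜] at hA𝒜
    obtain ⟨-, π, hπ, rfl⟩ := Finset.mem_filter.1 hA𝒜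
    refine ⟨π, hπ, fun l hl => ?_⟩
    have hlS : l ∈ S := hsS (hs'sub hl)
    have h1 : l ∈ s' ∩ S.filter (fun l => π l = true) ↔
        l ∈ s'.filter (fun l => f l = true) := by rw [hint]
    simp only [Finset.mem_inter, Finset.mem_filter, hl, hlS, true_and] at h1
    cases hb : π l <;> cases hb' : f l <;> simp [hb, hb'] at h1 ⊢ <;> tauto
  -- Step 3: Sauer-Shelah bound on #𝒜
  have step2 : 𝒜.card ≤ ∑ k ∈ Finset.Iic d, S.card.choose k := by
    calc 𝒜.card ≤ 𝒜.shatterer.card := Finset.card_le_card_shatterer 𝒜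
      _ ≤ ((Finset.Iic d).biUnion (fun k => S.powersetCard k)).card := by
          apply Finset.card_le_card
          intro s hs
          have hshat' := Finset.mem_shatterer.1 hs
          obtain ⟨hsub, hcard⟩ := hshat s hshat'
          exact Finset.mem_biUnion.2 ⟨s.card, Finset.mem_Iic.2 hcard,
            (Finset.mem_powersetCard).2 ⟨hsub, rfl⟩⟩
      _ ≤ ∑ k ∈ Finset.Iic d, (S.powersetCard k).card := Finset.card_biUnion_le
      _ = ∑ k ∈ Finset.Iic d, S.card.choose k := by
          simp [Finset.card_powersetCard]
  have hScard : S.card ≤ n * H := by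
    calc S.card ≤ (Finset.univ : Finset (Fin n × Fin H)).card := Finset.card_image_le
      _ = n * H := by simp
  have step3 : 𝒜.card ≤ ∑ k ∈ Finset.Iic d, (n * H).choose k :=
    step2.trans (Finset.sum_le_sum fun k _ => Nat.choose_le_choose k hScard)
  -- Conclude
  have hfinal := sum_choose_le_exp_pow (n * H) d hd hnH
  calc ((Set.ncard {v : Fin n → ℕ | ∃ π ∈ P, v = fun i => stopTime H π (x i)} : ℝ))
      ≤ (𝒜.card : ℝ) := by exact_mod_cast hcard1
    _ ≤ (∑ k ∈ Finset.Iic d, ((n * H).choose k : ℝ)) := by exact_mod_cast step3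
    _ ≤ (Real.exp 1 * (n * H : ℕ) / d) ^ d := hfinal
    _ = (Real.exp 1 * n * H / d) ^ d := by push_cast; ring
end

section
/- (Lemma 1, shattering form.) Let Π be a family of deterministic stopping policies with VC dimension at most d (as Boolean classifiers on List O), d ≥ 1, let g : List O → ℝ be a reward function, and let 𝓗 = { I(π, Δ) : π ∈ Π, Δ ∈ ℝ } be the associated indicator class on full trajectories, where I(π, Δ)(x) = true iff R_π(x) ≥ Δ. If 𝓗 shatters a set of n full trajectories of horizon H with n·H ≥ d, then 2^n ≤ (n·H + 1)·(e·n·H/d)^d. -/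
open scoped BigOperators

lemma sum_choose_le_real (d m : ℕ) (hd : 1 ≤ d) (hdm : d ≤ m) :
    ((∑ k ∈ Finset.Iic d, m.choose k : ℕ) : ℝ) ≤ (Real.exp 1 * m / d) ^ d := by
  have hm : 0 < m := hd.trans hdm
  have hm' : (0:ℝ) < m := by exact_mod_cast hm
  have hd' : (0:ℝ) < d := by exact_mod_cast hd
  set r : ℝ := (d : ℝ) / m with hr
  have hr0 : 0 < r := div_pos hd' hm'
  have hr1 : r ≤ 1 := by rw [hr, div_le_one hm']; exact_mod_cast hdm
  have step1 : ((∑ k ∈ Finset.Iic d, m.choose k : ℕ) : ℝ) * r ^ d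
      ≤ ∑ k ∈ Finset.Iic d, (m.choose k : ℝ) * r ^ k := by
    push_cast
    rw [Finset.sum_mul]
    refine Finset.sum_le_sum fun k hk => ?_
    exact mul_le_mul_of_nonneg_left
      (pow_le_pow_of_le_one hr0.le hr1 (Finset.mem_Iic.1 hk)) (by positivity)
  have step2 : ∑ k ∈ Finset.Iic d, (m.choose k : ℝ) * r ^ k
      ≤ ∑ k ∈ Finset.range (m+1), (m.choose k : ℝ) * r ^ k := by
    refine Finset.sum_le_sum_of_subset_of_nonneg ?_ (fun k _ _ => by positivity)
    intro k hk
    exact Finset.mem_range.2 (Nat.lt_succ_of_le ((Finset.mem_Iic.1 hk).trans hdm))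
  have step3 : ∑ k ∈ Finset.range (m+1), (m.choose k : ℝ) * r ^ k = (1 + r) ^ m := by
    rw [add_comm 1 r, add_pow]
    refine Finset.sum_congr rfl fun k hk => ?_
    ring
  have step4 : (1 + r) ^ m ≤ Real.exp 1 ^ d := by
    calc (1 + r) ^ m ≤ Real.exp r ^ m := by
          refine pow_le_pow_left₀ (by positivity) ?_ m
          linarith [Real.add_one_le_exp r]
      _ = Real.exp ((m : ℝ) * r) := (Real.exp_nat_mul r m).symm
      _ = Real.exp 1 ^ d := by
          rw [hr]
          rw [show (m : ℝ) * ((d:ℝ)/m) = (d:ℝ) * 1 by field_simp]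
          rw [Real.exp_nat_mul 1 d]
  have key : ((∑ k ∈ Finset.Iic d, m.choose k : ℕ) : ℝ) * r ^ d ≤ Real.exp 1 ^ d :=
    step1.trans (step2.trans (step3.le.trans step4))
  have hrd : 0 < r ^ d := by positivity
  rw [show Real.exp 1 * m / d = Real.exp 1 / r by rw [hr]; field_simp]
  rw [div_pow, le_div_iff₀ hrd]
  exact key

lemma policyReturn_congr {O : Type*} {H : ℕ} (g : List O → ℝ) (π π' : List O → Bool)
    (x : Fin H → O)
    (h : ∀ t, 1 ≤ t → t ≤ H → π (trajPrefix x t) = π' (trajPrefix x t)) :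
    policyReturn g π x = policyReturn g π' x := by
  have hiff : ∀ t, ((1 ≤ t ∧ t ≤ H) ∧ π (trajPrefix x t) = true) ↔
      ((1 ≤ t ∧ t ≤ H) ∧ π' (trajPrefix x t) = true) := by
    intro t
    constructor <;> rintro ⟨ht, hp⟩ <;> refine ⟨ht, ?_⟩
    · rw [← h t ht.1 ht.2]; exact hp
    · rw [h t ht.1 ht.2]; exact hp
  have hst : stopTime H π x = stopTime H π' x := by
    unfold stopTime
    by_cases hex : ∃ t, (1 ≤ t ∧ t ≤ H) ∧ π (trajPrefix x t) = true
    · have hex' : ∃ t, (1 ≤ t ∧ t ≤ H) ∧ π' (trajPrefix x t) = true := by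
        obtain ⟨t, ht⟩ := hex; exact ⟨t, (hiff t).1 ht⟩
      rw [dif_pos hex, dif_pos hex']
      exact le_antisymm (Nat.find_le ((hiff _).2 (Nat.find_spec hex')))
        (Nat.find_le ((hiff _).1 (Nat.find_spec hex)))
    · have hex' : ¬ ∃ t, (1 ≤ t ∧ t ≤ H) ∧ π' (trajPrefix x t) = true := by
        rintro ⟨t, ht⟩; exact hex ⟨t, (hiff t).2 ht⟩
      rw [dif_neg hex, dif_neg hex']
  unfold policyReturn
  rw [hst]

set_option maxHeartbeats 1000000 in
/-- Lemma 1 (shattering form): if the indicator class `𝓗 = {I(π, Δ)}` associated with a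
VC-dimension-`d` policy class shatters a set of `n` full trajectories of horizon `H` with
`n·H ≥ d`, then `2^n ≤ (n·H + 1)·(e·n·H/d)^d`. -/
theorem shatter_bound {O : Type*} {H n d : ℕ} (hH : 1 ≤ H) (hd : 1 ≤ d)
    (P : Set (List O → Bool))
    (hVC : ∀ S : Finset (List O), S.card = d + 1 → ¬ ShattersLists P S)
    (g : List O → ℝ)
    (x : Fin n → (Fin H → O)) (hinj : Function.Injective x) (hnH : d ≤ n * H)
    (hshatter : ∀ b : Fin n → Bool, ∃ π ∈ P, ∃ Δ : ℝ,
        ∀ i : Fin n, (b i = true ↔ Δ ≤ policyReturn g π (x i))) :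
    (2 : ℝ) ^ n ≤ ((n : ℝ) * H + 1) * (Real.exp 1 * n * H / d) ^ d := by
  classical
  -- the finite set of prefixes
  set S : Finset (List O) :=
    Finset.image (fun p : Fin n × Fin H => trajPrefix (x p.1) ((p.2 : ℕ) + 1))
      Finset.univ with hSdef
  have hmemS : ∀ (i : Fin n) (t : ℕ), 1 ≤ t → t ≤ H → trajPrefix (x i) t ∈ S := by
    intro i t h1 h2
    refine Finset.mem_image.2 ⟨(i, ⟨t - 1, by omega⟩), Finset.mem_univ _, ?_⟩
    simp only
    congr 1
    omega
  have hScard : S.card ≤ n * H := by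
    calc S.card ≤ (Finset.univ : Finset (Fin n × Fin H)).card := Finset.card_image_le
      _ = n * H := by simp
  have hretc : ∀ (π π' : List O → Bool), (∀ l ∈ S, π l = π' l) → ∀ i : Fin n,
      policyReturn g π (x i) = policyReturn g π' (x i) := fun π π' hag i =>
    policyReturn_congr g π π' (x i) (fun t h1 h2 => hag _ (hmemS i t h1 h2))
  -- choose realizing policies and thresholds
  choose π hπP Δ hΔ using hshatter
  -- behaviors on S
  set B : Finset ({ l // l ∈ S } → Bool) :=
    Finset.univ.filter (fun f => ∃ p ∈ P, ∀ s : { l // l ∈ S }, p s.1 = f s) with hBdef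
  set Φ : (Fin n → Bool) → (({ l // l ∈ S } → Bool) × ℕ) :=
    fun b => (fun s => π b s.1, (Finset.univ.filter (fun i => b i = true)).card) with hΦdef
  have hΦinj : Function.Injective Φ := by
    have main : ∀ b₁ b₂ : Fin n → Bool,
        (∀ i, policyReturn g (π b₁) (x i) = policyReturn g (π b₂) (x i)) →
        Δ b₁ ≤ Δ b₂ →
        Finset.univ.filter (fun i => b₂ i = true) ⊆
          Finset.univ.filter (fun i => b₁ i = true) := by
      intro b₁ b₂ hret hle i hi
      simp only [Finset.mem_filter, Finset.mem_univ, true_and] at hi ⊢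
      have h2 := (hΔ b₂ i).1 hi
      exact (hΔ b₁ i).2 (by rw [hret i]; linarith)
    intro b₁ b₂ hEq
    have h1 : ∀ s : { l // l ∈ S }, π b₁ s.1 = π b₂ s.1 :=
      fun s => congrFun (congrArg Prod.fst hEq) s
    have hret : ∀ i, policyReturn g (π b₁) (x i) = policyReturn g (π b₂) (x i) :=
      hretc _ _ (fun l hl => h1 ⟨l, hl⟩)
    have hcard : (Finset.univ.filter (fun i => b₁ i = true)).card
        = (Finset.univ.filter (fun i => b₂ i = true)).card := congrArg Prod.snd hEq
    have hfeq : Finset.univ.filter (fun i => b₁ i = true)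
        = Finset.univ.filter (fun i => b₂ i = true) := by
      rcases le_total (Δ b₁) (Δ b₂) with h | h
      · exact (Finset.eq_of_subset_of_card_le (main b₁ b₂ hret h) hcard.le).symm
      · exact Finset.eq_of_subset_of_card_le
          (main b₂ b₁ (fun i => (hret i).symm) h) hcard.ge
    funext i
    have := Finset.ext_iff.1 hfeq i
    simp only [Finset.mem_filter, Finset.mem_univ, true_and] at this
    exact Bool.eq_iff_iff.2 this
  -- counting: 2^n ≤ |B| * (n+1)
  have hcount : 2 ^ n ≤ B.card * (n + 1) := by
    have hmaps : ∀ b : Fin n → Bool, Φ b ∈ B ×ˢ Finset.range (n + 1) := by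
      intro b
      refine Finset.mem_product.2 ⟨?_, ?_⟩
      · exact Finset.mem_filter.2 ⟨Finset.mem_univ _, ⟨π b, hπP b, fun s => rfl⟩⟩
      · exact Finset.mem_range.2 (Nat.lt_succ_of_le
          (le_trans (Finset.card_filter_le (Finset.univ : Finset (Fin n)) (fun i => b i = true)) (by simp)))
    have hle := Finset.card_le_card_of_injOn (s := (Finset.univ : Finset (Fin n → Bool)))
      Φ (fun b _ => hmaps b) (fun a _ b _ h => hΦinj h)
    simpa [Finset.card_product, Fintype.card_fun] using hle
  -- Sauer-Shelah: |B| ≤ ∑_{k ≤ d} C(|S|, k)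
  have hBcard : B.card ≤ ∑ k ∈ Finset.Iic d, S.card.choose k := by
    set toSet : ({ l // l ∈ S } → Bool) → Finset { l // l ∈ S } :=
      fun f => Finset.univ.filter (fun s => f s = true) with htoSet
    have htinj : Function.Injective toSet := by
      intro f f' h
      funext s
      have := Finset.ext_iff.1 h s
      simp only [htoSet, Finset.mem_filter, Finset.mem_univ, true_and] at this
      exact Bool.eq_iff_iff.2 this
    set 𝒜 : Finset (Finset { l // l ∈ S }) := B.image toSet with h𝒜def
    have h𝒜card : 𝒜.card = B.card := Finset.card_image_of_injective _ htinj
    have hvc : 𝒜.vcDim ≤ d := by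
      refine Finset.sup_le ?_
      intro s hs
      rw [Finset.mem_shatterer] at hs
      by_contra hlt
      push_neg at hlt
      obtain ⟨s', hs'sub, hs'card⟩ := Finset.exists_subset_card_eq (show d + 1 ≤ s.card by omega)
      have hshat' : 𝒜.Shatters s' := hs.mono_right hs'sub
      refine hVC (s'.image Subtype.val) ?_ ?_
      · rw [Finset.card_image_of_injective _ Subtype.val_injective]; exact hs'card
      · intro f
        obtain ⟨u, hu𝒜, huint⟩ :=
          hshat' (Finset.filter_subset (fun t => f t.1 = true) s')
        obtain ⟨f', hf'B, rfl⟩ := Finset.mem_image.1 hu𝒜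
        obtain ⟨pf, hpfP, hpf⟩ := (Finset.mem_filter.1 hf'B).2
        refine ⟨pf, hpfP, ?_⟩
        intro l hl
        obtain ⟨si, hsi, rfl⟩ := Finset.mem_image.1 hl
        rw [hpf si]
        have hmem := Finset.ext_iff.1 huint si
        simp only [htoSet, Finset.mem_inter, Finset.mem_filter, Finset.mem_univ,
          true_and, hsi, true_and] at hmem
        exact Bool.eq_iff_iff.2 hmem
    calc B.card = 𝒜.card := h𝒜card.symm
      _ ≤ 𝒜.shatterer.card := Finset.card_le_card_shatterer 𝒜
      _ ≤ ∑ k ∈ Finset.Iic 𝒜.vcDim, (Fintype.card { l // l ∈ S }).choose k :=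
          Finset.card_shatterer_le_sum_vcDim
      _ ≤ ∑ k ∈ Finset.Iic d, S.card.choose k := by
          rw [Fintype.card_coe]
          exact Finset.sum_le_sum_of_subset (Finset.Iic_subset_Iic.2 hvc)
  -- monotonicity in m
  have hmono : ∑ k ∈ Finset.Iic d, S.card.choose k
      ≤ ∑ k ∈ Finset.Iic d, (n * H).choose k :=
    Finset.sum_le_sum fun k _ => Nat.choose_le_choose k hScard
  -- assemble
  have hnat : 2 ^ n ≤ (n + 1) * ∑ k ∈ Finset.Iic d, (n * H).choose k := by
    calc 2 ^ n ≤ B.card * (n + 1) := hcount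
      _ ≤ (∑ k ∈ Finset.Iic d, (n * H).choose k) * (n + 1) :=
          Nat.mul_le_mul_right _ (hBcard.trans hmono)
      _ = (n + 1) * ∑ k ∈ Finset.Iic d, (n * H).choose k := mul_comm _ _
  have hreal : (2 : ℝ) ^ n ≤ ((n : ℝ) + 1) *
      ((∑ k ∈ Finset.Iic d, (n * H).choose k : ℕ) : ℝ) := by
    exact_mod_cast hnat
  have hsum : ((∑ k ∈ Finset.Iic d, (n * H).choose k : ℕ) : ℝ)
      ≤ (Real.exp 1 * n * H / d) ^ d := by
    have := sum_choose_le_real d (n * H) hd hnH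
    convert this using 3
    push_cast
    ring
  refine hreal.trans ?_
  have hfac : ((n : ℝ) + 1) ≤ (n : ℝ) * H + 1 := by
    have : (n : ℝ) * 1 ≤ (n : ℝ) * H := by
      apply mul_le_mul_of_nonneg_left _ (by positivity)
      exact_mod_cast hH
    linarith
  exact mul_le_mul hfac hsum (by positivity) (by positivity)
end
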